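/- If {a >_lex b >_lex c} is a sorted triple in V_{n,d} (each pair among (a,b), (b,c), (a,c) is sorted), then the sorting signature sets satisfy Δ(a,c) = Δ(a,b) ⊔ Δ(b,c), i.e., Δ(a,b) and Δ(b,c) are disjoint and their union equals Δ(a,c). -/
import Mathlib


/-- The set `V_{n,d}^α` of nonnegative integer tuples with coordinate sum `d`
and coordinatewise bound `α`. -/
def VT (n d : ℕ) (α : Fin n → ℕ) : Set (Fin n → ℕ) :=
  {c | (∑ i, c i) = d ∧ ∀ i, c i ≤ α i}

/-- `a >_lex b`: the leftmost nonzero entry of `a - b` is positive. -/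
def lexGT {n : ℕ} (a b : Fin n → ℕ) : Prop :=
  ∃ i : Fin n, (∀ j, j < i → a j = b j) ∧ b i < a i

/-- `sort(a,b) = (a,b)` for Sturmfels' sorting operator: for every `t`, the prefix
sum of `a` up to `t` equals the ceiling of half the prefix sum of `a + b`. -/
def sortedPair {n : ℕ} (a b : Fin n → ℕ) : Prop :=
  ∀ t : Fin n, 2 * (∑ i ∈ Finset.Iic t, a i)
    = (∑ i ∈ Finset.Iic t, (a i + b i)) + (∑ i ∈ Finset.Iic t, (a i + b i)) % 2

/-- The sorting signature set `Δ(a,b)` of a sorted pair, recorded (0-indexed) as the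
set of positions `t` where the prefix sum of `b` is one less than that of `a`. -/
def sigSet {n : ℕ} (a b : Fin n → ℕ) : Finset (Fin n) :=
  Finset.univ.filter (fun t => (∑ i ∈ Finset.Iic t, b i) + 1 = ∑ i ∈ Finset.Iic t, a i)

/-- Adjacency in the sorting graph `𝒢(d,α)`. -/
def adjG {n : ℕ} (a b : Fin n → ℕ) : Prop :=
  (lexGT a b ∧ sortedPair a b) ∨ (lexGT b a ∧ sortedPair b a)

/-- A clique of the sorting graph `𝒢(d,α)`. -/
def isClique (n d : ℕ) (α : Fin n → ℕ) (S : Finset (Fin n → ℕ)) : Prop :=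
  (↑S ⊆ VT n d α) ∧ ∀ a ∈ S, ∀ b ∈ S, a ≠ b → adjG a b

/-- A maximal clique of the sorting graph `𝒢(d,α)`. -/
def isMaxClique (n d : ℕ) (α : Fin n → ℕ) (S : Finset (Fin n → ℕ)) : Prop :=
  isClique n d α S ∧ ∀ T, isClique n d α T → S ⊆ T → S = T

/-- If `{a >_lex b >_lex c}` is a sorted triple in `V_{n,d}`, then
`Δ(a,c) = Δ(a,b) ⊔ Δ(b,c)`. -/
theorem stmt4 (n d : ℕ) (a b c : Fin n → ℕ)
    (ha : ∑ i, a i = d) (hb : ∑ i, b i = d) (hc : ∑ i, c i = d)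
    (hab : lexGT a b) (hbc : lexGT b c)
    (sab : sortedPair a b) (sbc : sortedPair b c) (sac : sortedPair a c) :
    Disjoint (sigSet a b) (sigSet b c) ∧ sigSet a b ∪ sigSet b c = sigSet a c := by
  have key : ∀ (u v : Fin n → ℕ), sortedPair u v → ∀ t : Fin n,
      (∑ i ∈ Finset.Iic t, u i) = (∑ i ∈ Finset.Iic t, v i) ∨
      (∑ i ∈ Finset.Iic t, u i) = (∑ i ∈ Finset.Iic t, v i) + 1 := by
    intro u v h t
    have := h t
    rw [Finset.sum_add_distrib] at this
    omega
  constructor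
  · rw [Finset.disjoint_left]
    intro t h1 h2
    simp only [sigSet, Finset.mem_filter, Finset.mem_univ, true_and] at h1 h2
    have h3 := key a c sac t
    omega
  · ext t
    simp only [sigSet, Finset.mem_union, Finset.mem_filter, Finset.mem_univ, true_and]
    have h1 := key a b sab t
    have h2 := key b c sbc t
    have h3 := key a c sac t
    omega
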